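/- arXiv:1909.03266 — 5 statements merged into one kernel-verified Lean document; each statement's English description precedes it below -/
import Mathlib

section
/- Let H be an odd positive integer. For every real number α, ∑_{h=1}^H sin²(παh)/h ≤ ∑_{h=1}^H (1−(−1)^h)/(2h). -/
open Real

namespace SinSqAux

open Finset

noncomputable def S (n : ℕ) (v : ℝ) : ℝ :=
  ∑ i ∈ Finset.range n, (-1 : ℝ) ^ i * Real.sin (((i : ℝ) + 1) * v) ^ 2 / ((i : ℝ) + 1)

noncomputable def P (n : ℕ) (t : ℝ) : ℝ :=
  ∑ i ∈ Finset.range n, (-1 : ℝ) ^ i * Real.sin (2 * ((i : ℝ) + 1) * t)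

lemma continuous_P (n : ℕ) : Continuous (P n) := by
  refine continuous_finset_sum _ fun i _ => ?_
  have h : Continuous fun t : ℝ => Real.sin (2 * ((i : ℝ) + 1) * t) :=
    Real.continuous_sin.comp (continuous_const.mul continuous_id')
  exact continuous_const.mul h

lemma hasDerivAt_S (n : ℕ) (v : ℝ) : HasDerivAt (S n) (P n v) v := by
  have h : HasDerivAt (fun v => ∑ i ∈ Finset.range n,
      (-1 : ℝ) ^ i * Real.sin (((i : ℝ) + 1) * v) ^ 2 / ((i : ℝ) + 1))
      (∑ i ∈ Finset.range n, (-1 : ℝ) ^ i * Real.sin (2 * ((i : ℝ) + 1) * v)) v := by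
    refine HasDerivAt.fun_sum fun i _ => ?_
    set c : ℝ := (i : ℝ) + 1 with hc
    have hc0 : c ≠ 0 := by positivity
    have h1 : HasDerivAt (fun y : ℝ => c * y) c v := by
      simpa using (hasDerivAt_id v).const_mul c
    have h2 : HasDerivAt (fun y : ℝ => Real.sin (c * y)) (Real.cos (c * v) * c) v :=
      (Real.hasDerivAt_sin (c * v)).comp v h1
    have h4 := ((h2.pow 2).div_const c).const_mul ((-1 : ℝ) ^ i)
    have harg : 2 * c * v = 2 * (c * v) := by ring
    have : (-1 : ℝ) ^ i * Real.sin (2 * c * v)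
        = (-1 : ℝ) ^ i * (↑2 * Real.sin (c * v) ^ (2 - 1) * (Real.cos (c * v) * c) / c) := by
      rw [harg, Real.sin_two_mul]
      field_simp
      ring
    rw [this]
    simpa [mul_div_assoc] using h4
  exact h

lemma key (n : ℕ) (hn : Odd n) (t : ℝ) :
    2 * Real.cos t * P n t = Real.sin t + Real.sin ((2 * (n : ℝ) + 1) * t) := by
  have expand : ∀ i : ℕ, 2 * Real.cos t * ((-1:ℝ)^i * Real.sin (2*((i:ℝ)+1)*t))
      = (fun j : ℕ => (-1:ℝ)^j * Real.sin ((2*(j:ℝ)+1)*t)) i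
        - (fun j : ℕ => (-1:ℝ)^j * Real.sin ((2*(j:ℝ)+1)*t)) (i+1) := by
    intro i
    simp only []
    have e1 : Real.sin ((2*((i+1:ℕ):ℝ)+1)*t)
        = Real.sin (2*((i:ℝ)+1)*t) * Real.cos t + Real.cos (2*((i:ℝ)+1)*t) * Real.sin t := by
      push_cast
      rw [show (2*((i:ℝ)+1)+1)*t = 2*((i:ℝ)+1)*t + t by ring, Real.sin_add]
    have e2 : Real.sin ((2*(i:ℝ)+1)*t)
        = Real.sin (2*((i:ℝ)+1)*t) * Real.cos t - Real.cos (2*((i:ℝ)+1)*t) * Real.sin t := by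
      rw [show (2*(i:ℝ)+1)*t = 2*((i:ℝ)+1)*t - t by ring, Real.sin_sub]
    rw [e1, e2, pow_succ]
    ring
  unfold P
  rw [Finset.mul_sum, Finset.sum_congr rfl fun i _ => expand i,
    Finset.sum_range_sub' (fun j : ℕ => (-1:ℝ)^j * Real.sin ((2*(j:ℝ)+1)*t)) n]
  simp only [Nat.cast_zero, pow_zero, one_mul, hn.neg_one_pow]
  ring_nf

lemma P_nonneg_first (n : ℕ) (hn : Odd n) (hpos : 0 < n) (t : ℝ)
    (ht0 : 0 ≤ t) (ht1 : t ≤ π / (2 * (n : ℝ) + 1)) : 0 ≤ P n t := by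
  have hM : (0:ℝ) < 2 * (n : ℝ) + 1 := by positivity
  have hM3 : (3:ℝ) ≤ 2 * (n : ℝ) + 1 := by
    have : (1:ℝ) ≤ (n : ℝ) := by exact_mod_cast hpos
    linarith
  have hpi : 0 < π := Real.pi_pos
  have htpi2 : t < π / 2 := by
    have h1 : π / (2 * (n : ℝ) + 1) ≤ π / 3 := by
      apply div_le_div_of_nonneg_left hpi.le (by norm_num) hM3
    nlinarith
  have hcos : 0 < Real.cos t := Real.cos_pos_of_mem_Ioo ⟨by linarith, htpi2⟩
  have hsin1 : 0 ≤ Real.sin t := Real.sin_nonneg_of_nonneg_of_le_pi ht0 (by nlinarith)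
  have hsin2 : 0 ≤ Real.sin ((2 * (n : ℝ) + 1) * t) := by
    apply Real.sin_nonneg_of_nonneg_of_le_pi (by positivity)
    calc (2 * (n : ℝ) + 1) * t ≤ (2 * (n : ℝ) + 1) * (π / (2 * (n : ℝ) + 1)) := by
          apply mul_le_mul_of_nonneg_left ht1 hM.le
      _ = π := by field_simp
  have hk := key n hn t
  nlinarith [hk]

lemma pair_nonneg (n : ℕ) (hn : Odd n) (t : ℝ) (ht0 : 0 ≤ t)
    (ht1 : t + π / (2 * (n : ℝ) + 1) < π / 2) :
    0 ≤ P n t + P n (t + π / (2 * (n : ℝ) + 1)) := by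
  have hM : (0:ℝ) < 2 * (n : ℝ) + 1 := by positivity
  have hpi : 0 < π := Real.pi_pos
  set μ : ℝ := π / (2 * (n : ℝ) + 1) with hμ
  have hμpos : 0 < μ := by positivity
  set b : ℝ := t + μ with hb
  have htb : t < b := by rw [hb]; linarith
  have hbpi2 : b < π / 2 := ht1
  have htpi2 : t < π / 2 := lt_trans htb hbpi2
  have hcost : 0 < Real.cos t := Real.cos_pos_of_mem_Ioo ⟨by linarith, htpi2⟩
  have hcosb : 0 < Real.cos b := Real.cos_pos_of_mem_Ioo ⟨by linarith, hbpi2⟩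
  have hMb : (2 * (n : ℝ) + 1) * b = (2 * (n : ℝ) + 1) * t + π := by
    rw [hb, hμ]; field_simp
  have hsinMb : Real.sin ((2 * (n : ℝ) + 1) * b) = - Real.sin ((2 * (n : ℝ) + 1) * t) := by
    rw [hMb, Real.sin_add_pi]
  have hkt := key n hn t
  have hkb := key n hn b
  rw [hsinMb] at hkb
  have hPt : P n t = (Real.sin t + Real.sin ((2 * (n : ℝ) + 1) * t)) / (2 * Real.cos t) := by
    field_simp
    linarith [hkt]
  have hPb : P n b = (Real.sin b - Real.sin ((2 * (n : ℝ) + 1) * t)) / (2 * Real.cos b) := by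
    field_simp
    linarith [hkb]
  rw [hPt, hPb, div_add_div _ _ (by positivity) (by positivity)]
  apply div_nonneg _ (by positivity)
  -- numerator
  have hF1 : Real.cos b ≤ Real.cos t :=
    Real.cos_le_cos_of_nonneg_of_le_pi ht0 (by linarith) htb.le
  have hF2 : Real.sin ((2 * (n : ℝ) + 1) * t) ≤ 1 := Real.sin_le_one _
  have hF2' : -1 ≤ Real.sin ((2 * (n : ℝ) + 1) * t) := Real.neg_one_le_sin _
  -- F3 : cos t - cos b ≤ sin (t + b)
  have hθ : (t + b) / 2 + μ / 2 ≤ π / 2 := by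
    rw [hb]; linarith
  have hθ0 : 0 ≤ (t + b) / 2 := by positivity
  have hsinθ : 0 ≤ Real.sin ((t + b) / 2) :=
    Real.sin_nonneg_of_nonneg_of_le_pi hθ0 (by linarith)
  have hmono : Real.sin (μ / 2) ≤ Real.sin (π / 2 - (t + b) / 2) := by
    apply Real.strictMonoOn_sin.monotoneOn ⟨by linarith, by linarith⟩
      ⟨by linarith, by linarith⟩ (by linarith)
  rw [Real.sin_pi_div_two_sub] at hmono
  have hF3 : Real.cos t - Real.cos b ≤ Real.sin (t + b) := by
    have hcc : Real.cos t - Real.cos b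
        = 2 * Real.sin ((t + b) / 2) * Real.sin (μ / 2) := by
      rw [Real.cos_sub_cos]
      rw [show (t - b) / 2 = -(μ / 2) by rw [hb]; ring, Real.sin_neg]
      ring
    have hss := Real.sin_two_mul ((t + b) / 2)
    rw [show 2 * ((t + b) / 2) = t + b by ring] at hss
    rw [hcc, hss]
    nlinarith [hsinθ, hmono]
  have hsab : Real.sin t * Real.cos b + Real.cos t * Real.sin b = Real.sin (t + b) :=
    (Real.sin_add t b).symm
  nlinarith [hF1, hF2, hF3, hsab]

lemma intInt (n : ℕ) (a b : ℝ) : IntervalIntegrable (P n) MeasureTheory.volume a b :=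
  (continuous_P n).intervalIntegrable a b

lemma intInt' (n : ℕ) (c a b : ℝ) :
    IntervalIntegrable (fun t => P n (t + c)) MeasureTheory.volume a b :=
  ((continuous_P n).comp (continuous_id'.add continuous_const)).intervalIntegrable a b

lemma S_integral (n : ℕ) (a b : ℝ) : ∫ t in a..b, P n t = S n b - S n a :=
  intervalIntegral.integral_eq_sub_of_hasDerivAt (fun t _ => hasDerivAt_S n t) (intInt n a b)

lemma S_zero (n : ℕ) : S n 0 = 0 := by
  unfold S
  simp

lemma chunk_nonneg (n : ℕ) (hn : Odd n) (a c : ℝ) (ha : 0 ≤ a) (hac : a ≤ c)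
    (hc : c + π / (2 * (n : ℝ) + 1) < π / 2) :
    0 ≤ ∫ t in a..c, (P n t + P n (t + π / (2 * (n : ℝ) + 1))) := by
  apply intervalIntegral.integral_nonneg hac
  intro u hu
  exact pair_nonneg n hn u (le_trans ha hu.1) (by
    have := hu.2
    have hM : (0:ℝ) < 2 * (n : ℝ) + 1 := by positivity
    linarith)

lemma split_two (n : ℕ) (v : ℝ) (hv : 0 ≤ v - 2 * (π / (2 * (n : ℝ) + 1))) :
    S n v = S n (v - 2 * (π / (2 * (n : ℝ) + 1)))
      + ∫ t in (v - 2 * (π / (2 * (n : ℝ) + 1)))..(v - π / (2 * (n : ℝ) + 1)),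
          (P n t + P n (t + π / (2 * (n : ℝ) + 1))) := by
  set μ : ℝ := π / (2 * (n : ℝ) + 1) with hμ
  have h1 : ∫ t in (v - 2*μ)..(v - μ), P n (t + μ) = ∫ t in (v - μ)..v, P n t := by
    rw [intervalIntegral.integral_comp_add_right (fun t => P n t) μ]
    ring_nf
  have h2 : (∫ t in (v - 2*μ)..(v - μ), (P n t + P n (t + μ)))
      = (∫ t in (v - 2*μ)..(v - μ), P n t) + ∫ t in (v - μ)..v, P n t := by
    rw [intervalIntegral.integral_add (intInt n _ _) (intInt' n μ _ _), h1]
  have h3 : (∫ t in (v - 2*μ)..(v - μ), P n t) + (∫ t in (v - μ)..v, P n t)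
      = ∫ t in (v - 2*μ)..v, P n t :=
    intervalIntegral.integral_add_adjacent_intervals (intInt n _ _) (intInt n _ _)
  rw [h2, h3, S_integral]
  ring

lemma split_second (n : ℕ) (v : ℝ) (hv : π / (2 * (n : ℝ) + 1) ≤ v) :
    S n v = (∫ t in (0:ℝ)..(v - π / (2 * (n : ℝ) + 1)),
        (P n t + P n (t + π / (2 * (n : ℝ) + 1))))
      + ∫ t in (v - π / (2 * (n : ℝ) + 1))..(π / (2 * (n : ℝ) + 1)), P n t := by
  set μ : ℝ := π / (2 * (n : ℝ) + 1) with hμ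
  have h1 : ∫ t in (0:ℝ)..(v - μ), P n (t + μ) = ∫ t in μ..v, P n t := by
    rw [intervalIntegral.integral_comp_add_right (fun t => P n t) μ]
    ring_nf
  have h2 : (∫ t in (0:ℝ)..(v - μ), (P n t + P n (t + μ)))
      = (∫ t in (0:ℝ)..(v - μ), P n t) + ∫ t in μ..v, P n t := by
    rw [intervalIntegral.integral_add (intInt n _ _) (intInt' n μ _ _), h1]
  have h3 : (∫ t in (0:ℝ)..(v-μ), P n t) + (∫ t in (v-μ)..μ, P n t)
      = ∫ t in (0:ℝ)..μ, P n t :=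
    intervalIntegral.integral_add_adjacent_intervals (intInt n _ _) (intInt n _ _)
  have h4 : (∫ t in (0:ℝ)..μ, P n t) + (∫ t in μ..v, P n t)
      = ∫ t in (0:ℝ)..v, P n t :=
    intervalIntegral.integral_add_adjacent_intervals (intInt n _ _) (intInt n _ _)
  have h5 : S n v = ∫ t in (0:ℝ)..v, P n t := by
    rw [S_integral, S_zero]; ring
  rw [h2, h5, ← h4, ← h3]
  ring

lemma main_induction (n : ℕ) (hn : Odd n) (hpos : 0 < n) (k : ℕ) :
    ∀ v : ℝ, 0 ≤ v → v < π / 2 → v ≤ ((k : ℝ) + 1) * (π / (2 * (n : ℝ) + 1)) → 0 ≤ S n v := by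
  have hM : (0:ℝ) < 2 * (n : ℝ) + 1 := by positivity
  have hμpos : 0 < π / (2 * (n : ℝ) + 1) := by
    have := Real.pi_pos; positivity
  set μ : ℝ := π / (2 * (n : ℝ) + 1) with hμ
  induction k with
  | zero =>
    intro v hv0 hv2 hvk
    have hS : S n v = ∫ t in (0:ℝ)..v, P n t := by rw [S_integral, S_zero]; ring
    rw [hS]
    apply intervalIntegral.integral_nonneg hv0
    intro u hu
    exact P_nonneg_first n hn hpos u hu.1 (le_trans hu.2 (by simpa using hvk))
  | succ k ih =>
    intro v hv0 hv2 hvk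
    by_cases hle : v ≤ ((k : ℝ) + 1) * μ
    · exact ih v hv0 hv2 hle
    push_neg at hle
    have hvμ : μ < v := by
      have h1 : μ ≤ ((k : ℝ) + 1) * μ := by nlinarith [Nat.cast_nonneg (α := ℝ) k]
      linarith
    rcases Nat.eq_zero_or_pos k with hk0 | hkpos
    · -- second arc : μ < v ≤ 2μ
      subst hk0
      have hv2μ : v ≤ 2 * μ := by
        have : ((0 : ℕ) : ℝ) + 1 + 1 = 2 := by norm_num
        calc v ≤ (((0:ℕ) : ℝ) + 1 + 1) * μ := by exact_mod_cast hvk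
          _ = 2 * μ := by rw [this]
      rw [split_second n v hvμ.le]
      have c1 : 0 ≤ ∫ t in (0:ℝ)..(v - μ), (P n t + P n (t + μ)) :=
        chunk_nonneg n hn 0 (v - μ) le_rfl (by linarith) (by linarith)
      have c2 : 0 ≤ ∫ t in (v - μ)..μ, P n t := by
        apply intervalIntegral.integral_nonneg (by linarith)
        intro u hu
        exact P_nonneg_first n hn hpos u (by linarith [hu.1]) hu.2
      linarith
    · -- main step : v > (k+1) μ ≥ 2 μ
      have hk1 : (1 : ℝ) ≤ (k : ℝ) := by exact_mod_cast hkpos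
      have h2μ : 2 * μ ≤ v := by nlinarith
      rw [split_two n v (by linarith)]
      have c1 : 0 ≤ ∫ t in (v - 2*μ)..(v - μ), (P n t + P n (t + μ)) :=
        chunk_nonneg n hn (v - 2*μ) (v - μ) (by linarith) (by linarith) (by
          have : v - μ + μ = v := by ring
          rw [this]; exact hv2)
      have c2 : 0 ≤ S n (v - 2*μ) := by
        apply ih (v - 2*μ) (by linarith) (by linarith)
        have : v ≤ ((k : ℝ) + 1 + 1) * μ := by exact_mod_cast hvk
        nlinarith
      linarith

lemma sinsq_add_nat (x : ℝ) (k : ℕ) : Real.sin (x + (k : ℝ) * π) ^ 2 = Real.sin x ^ 2 := by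
  induction k with
  | zero => simp
  | succ k ih =>
    have : x + ((k : ℝ) + 1) * π = (x + (k : ℝ) * π) + π := by ring
    rw [Nat.cast_succ, this, Real.sin_add_pi, neg_pow, ih]
    norm_num

lemma S_neg (n : ℕ) (u : ℝ) : S n (-u) = S n u := by
  unfold S
  refine Finset.sum_congr rfl fun i _ => ?_
  rw [show ((i : ℝ) + 1) * (-u) = -(((i : ℝ) + 1) * u) by ring, Real.sin_neg, neg_pow]
  norm_num

lemma S_add_nat_pi (n : ℕ) (w : ℝ) (k : ℕ) : S n (w + (k : ℝ) * π) = S n w := by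
  unfold S
  refine Finset.sum_congr rfl fun i _ => ?_
  have : ((i : ℝ) + 1) * (w + (k : ℝ) * π)
      = ((i : ℝ) + 1) * w + (((i + 1) * k : ℕ) : ℝ) * π := by push_cast; ring
  rw [this, sinsq_add_nat]

lemma S_pi_sub (n : ℕ) (w : ℝ) : S n (π - w) = S n w := by
  unfold S
  refine Finset.sum_congr rfl fun i _ => ?_
  have : ((i : ℝ) + 1) * (π - w)
      = -(((i : ℝ) + 1) * w) + (((i + 1 : ℕ)) : ℝ) * π := by push_cast; ring
  rw [this, sinsq_add_nat, Real.sin_neg, neg_pow]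
  norm_num

lemma S_pi_div_two (n : ℕ) : 0 ≤ S n (π / 2) := by
  unfold S
  apply Finset.sum_nonneg
  intro i _
  rcases Nat.even_or_odd i with he | ho
  · rw [he.neg_one_pow]
    positivity
  · obtain ⟨l, hl⟩ := ho
    have : ((i : ℝ) + 1) * (π / 2) = ((l + 1 : ℕ) : ℝ) * π := by
      subst hl; push_cast; ring
    rw [this, Real.sin_nat_mul_pi]
    simp

lemma claimA_nonneg (n : ℕ) (hn : Odd n) (hpos : 0 < n) (u : ℝ) (hu0 : 0 ≤ u) :
    0 ≤ S n u := by
  have hpi : 0 < π := Real.pi_pos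
  have hμpos : 0 < π / (2 * (n : ℝ) + 1) := by positivity
  set μ : ℝ := π / (2 * (n : ℝ) + 1) with hμ
  set k : ℕ := ⌊u / π⌋₊ with hk
  have hkle : (k : ℝ) ≤ u / π := Nat.floor_le (by positivity)
  have hklt : u / π < (k : ℝ) + 1 := Nat.lt_floor_add_one (u / π)
  have hw0 : 0 ≤ u - (k : ℝ) * π := by
    have : (k : ℝ) * π ≤ u := by
      have := mul_le_mul_of_nonneg_right hkle hpi.le
      rwa [div_mul_cancel₀] at this
      exact hpi.ne'
    linarith
  have hwπ : u - (k : ℝ) * π < π := by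
    have : u < ((k : ℝ) + 1) * π := by
      have := mul_lt_mul_of_pos_right hklt hpi
      rwa [div_mul_cancel₀] at this
      exact hpi.ne'
    nlinarith
  have hSu : S n u = S n (u - (k : ℝ) * π) := by
    conv_lhs => rw [show u = (u - (k : ℝ) * π) + (k : ℝ) * π by ring]
    rw [S_add_nat_pi]
  rw [hSu]
  set w : ℝ := u - (k : ℝ) * π with hwdef
  have fin : ∀ x : ℝ, 0 ≤ x → x < π / 2 → 0 ≤ S n x := by
    intro x hx0 hx2
    obtain ⟨k', hk'⟩ := exists_nat_ge (x / μ)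
    apply main_induction n hn hpos k' x hx0 hx2
    have hxk : x ≤ (k' : ℝ) * μ := by
      have := mul_le_mul_of_nonneg_right hk' hμpos.le
      rwa [div_mul_cancel₀] at this
      exact hμpos.ne'
    nlinarith
  rcases lt_trichotomy w (π / 2) with h | h | h
  · exact fin w hw0 h
  · rw [h]; exact S_pi_div_two n
  · rw [show w = π - (π - w) by ring, S_pi_sub]
    exact fin (π - w) (by linarith) (by linarith)

lemma claimA (n : ℕ) (hn : Odd n) (hpos : 0 < n) (u : ℝ) : 0 ≤ S n u := by
  rcases le_total 0 u with hu0 | hu0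
  · exact claimA_nonneg n hn hpos u hu0
  · rw [← S_neg]
    exact claimA_nonneg n hn hpos (-u) (by linarith)

end SinSqAux

theorem sum_sin_sq_div_le (H : ℕ) (hpos : 0 < H) (hodd : Odd H) (α : ℝ) :
    ∑ h ∈ Finset.Icc 1 H, Real.sin (π * α * h) ^ 2 / h ≤
      ∑ h ∈ Finset.Icc 1 H, (1 - (-1 : ℝ) ^ h) / (2 * h) := by
  rw [← sub_nonneg, ← Finset.sum_sub_distrib]
  have hA := SinSqAux.claimA H hodd hpos (π * α + π / 2)
  have heq : ∑ h ∈ Finset.Icc 1 H,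
      ((1 - (-1:ℝ)^h) / (2*(h:ℝ)) - Real.sin (π*α*(h:ℝ))^2/(h:ℝ))
      = SinSqAux.S H (π*α + π/2) := by
    unfold SinSqAux.S
    rw [← Finset.Ico_add_one_right_eq_Icc, Finset.sum_Ico_eq_sum_range,
      show H + 1 - 1 = H from rfl]
    refine Finset.sum_congr rfl fun i _ => ?_
    have hc : ((1 + i : ℕ) : ℝ) = (i : ℝ) + 1 := by push_cast; ring
    have hc0 : (i : ℝ) + 1 ≠ 0 := by positivity
    have hpow : (-1 : ℝ) ^ (1 + i) = - (-1 : ℝ) ^ i := by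
      rw [pow_add]; ring
    have harg : π * α * ((i : ℝ) + 1) = ((i : ℝ) + 1) * (π * α) := by
      ring
    rcases Nat.even_or_odd i with he | ho
    · -- i even, h = i+1 odd
      have hpe : (-1 : ℝ) ^ i = 1 := he.neg_one_pow
      obtain ⟨l, hl⟩ := he
      have hie : (i : ℝ) = 2 * (l : ℝ) := by subst hl; push_cast; ring
      have e1 : ((i : ℝ) + 1) * (π * α + π / 2)
          = (((i : ℝ) + 1) * (π * α) + π / 2) + (l : ℝ) * π := by
        rw [hie]; ring
      rw [hc, hpow, harg, e1, SinSqAux.sinsq_add_nat, Real.sin_add_pi_div_two,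
        Real.cos_sq', hpe]
      field_simp
      ring
    · -- i odd, h = i+1 even
      have hpo : (-1 : ℝ) ^ i = -1 := ho.neg_one_pow
      obtain ⟨l, hl⟩ := ho
      have hie : (i : ℝ) = 2 * (l : ℝ) + 1 := by subst hl; push_cast; ring
      have e1 : ((i : ℝ) + 1) * (π * α + π / 2)
          = (((i : ℝ) + 1) * (π * α)) + ((l + 1 : ℕ) : ℝ) * π := by
        rw [hie]; push_cast; ring
      rw [hc, hpow, harg, e1, SinSqAux.sinsq_add_nat, hpo]
      field_simp
      ring
  rw [heq]
  exact hA
end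

section
/- The function g : [0,1/2] → ℝ defined by g(t) = cos(2πtH)/(4H) + ∑_{h=1}^H (1 − cos(2πth))/(2h), for a fixed positive integer H, is nondecreasing on [0,1/2]; indeed its derivative equals π·sin²(πtH)·cos(πt)/sin(πt) ≥ 0 for t ∈ (0,1/2]. -/
open Real

private lemma sum_sin_mul (t : ℝ) : ∀ H : ℕ,
    (∑ h ∈ Finset.Icc 1 H, Real.sin (2 * π * t * h)) * Real.sin (π * t)
      = Real.sin (π * t * H) * Real.sin (π * t * (H + 1)) := by
  intro H
  induction H with
  | zero => simp
  | succ n ih =>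
    rw [Finset.sum_Icc_succ_top (by omega : 1 ≤ n + 1)]
    push_cast
    push_cast at ih
    rw [add_mul, ih]
    have e1 : π * t * (n + 1 + 1) = π * t * (n + 1) + π * t := by ring
    have e2 : π * t * (n : ℝ) = π * t * (n + 1) - π * t := by ring
    have e3 : 2 * π * t * ((n : ℝ) + 1) = π * t * (n + 1) + π * t * (n + 1) := by ring
    rw [e1, e2, e3, Real.sin_add, Real.sin_sub, Real.sin_add]
    ring

private lemma hasDerivAt_g (H : ℕ) (hH : 0 < H) (t : ℝ) :
    HasDerivAt
      (fun t : ℝ => Real.cos (2 * π * t * H) / (4 * H) +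
        ∑ h ∈ Finset.Icc 1 H, (1 - Real.cos (2 * π * t * h)) / (2 * h))
      (-(π / 2) * Real.sin (2 * π * t * H) +
        ∑ h ∈ Finset.Icc 1 H, π * Real.sin (2 * π * t * h)) t := by
  have hinner : ∀ c : ℝ, HasDerivAt (fun t : ℝ => 2 * π * t * c) (2 * π * c) t := by
    intro c
    simpa using (((hasDerivAt_id t).const_mul (2 * π)).mul_const c)
  have hcos : ∀ c : ℝ, HasDerivAt (fun t : ℝ => Real.cos (2 * π * t * c))
      (-Real.sin (2 * π * t * c) * (2 * π * c)) t := by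
    intro c
    exact (Real.hasDerivAt_cos (2 * π * t * c)).comp t (hinner c)
  have h1 : HasDerivAt (fun t : ℝ => Real.cos (2 * π * t * H) / (4 * H))
      (-(π / 2) * Real.sin (2 * π * t * H)) t := by
    have := (hcos H).div_const (4 * H)
    convert this using 1
    case e'_9 =>
      have : (H : ℝ) ≠ 0 := Nat.cast_ne_zero.mpr hH.ne'
      rw [eq_div_iff (mul_ne_zero four_ne_zero this)]
      ring
    all_goals rfl
  have h2 : HasDerivAt (fun t : ℝ => ∑ h ∈ Finset.Icc 1 H, (1 - Real.cos (2 * π * t * h)) / (2 * h))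
      (∑ h ∈ Finset.Icc 1 H, π * Real.sin (2 * π * t * h)) t := by
    refine HasDerivAt.fun_sum fun h hh => ?_
    have hh1 : (1 : ℕ) ≤ h := (Finset.mem_Icc.mp hh).1
    have hne : (h : ℝ) ≠ 0 := Nat.cast_ne_zero.mpr (by omega)
    have := ((hasDerivAt_const t (1:ℝ)).sub (hcos h)).div_const (2 * h)
    convert this using 1
    case e'_9 =>
      rw [eq_div_iff (mul_ne_zero two_ne_zero hne)]
      ring
    all_goals rfl
  exact h1.add h2

private lemma g_deriv_eq (H : ℕ) (t : ℝ) (hs : Real.sin (π * t) ≠ 0) :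
    -(π / 2) * Real.sin (2 * π * t * H) + ∑ h ∈ Finset.Icc 1 H, π * Real.sin (2 * π * t * h)
      = π * Real.sin (π * t * H) ^ 2 * Real.cos (π * t) / Real.sin (π * t) := by
  have key := sum_sin_mul t H
  have e2 : Real.sin (π * t * ((H : ℝ) + 1))
      = Real.sin (π * t * H) * Real.cos (π * t) + Real.cos (π * t * H) * Real.sin (π * t) := by
    rw [show π * t * ((H : ℝ) + 1) = π * t * H + π * t by ring, Real.sin_add]
  rw [e2] at key
  have e1 : Real.sin (2 * π * t * H) = 2 * Real.sin (π * t * H) * Real.cos (π * t * H) := by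
    rw [show 2 * π * t * (H : ℝ) = 2 * (π * t * H) by ring, Real.sin_two_mul]
  have h1 : ∑ h ∈ Finset.Icc 1 H, π * Real.sin (2 * π * t * h)
      = π * ∑ h ∈ Finset.Icc 1 H, Real.sin (2 * π * t * h) := by rw [Finset.mul_sum]
  rw [eq_div_iff hs, h1, e1]
  linear_combination π * key

private lemma sin_pi_pos {t : ℝ} (h0 : 0 < t) (h2 : t ≤ 1 / 2) : 0 < Real.sin (π * t) :=
  Real.sin_pos_of_pos_of_lt_pi (by positivity)
    (by nlinarith [Real.pi_pos])

private lemma cos_pi_nonneg {t : ℝ} (h0 : 0 ≤ t) (h2 : t ≤ 1 / 2) : 0 ≤ Real.cos (π * t) :=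
  Real.cos_nonneg_of_mem_Icc ⟨by nlinarith [Real.pi_pos], by nlinarith [Real.pi_pos]⟩

theorem g_monotone_and_deriv (H : ℕ) (hH : 0 < H) :
    MonotoneOn
      (fun t : ℝ => Real.cos (2 * π * t * H) / (4 * H) +
        ∑ h ∈ Finset.Icc 1 H, (1 - Real.cos (2 * π * t * h)) / (2 * h))
      (Set.Icc 0 (1 / 2)) ∧
    ∀ t ∈ Set.Ioc (0 : ℝ) (1 / 2),
      HasDerivAt
        (fun t : ℝ => Real.cos (2 * π * t * H) / (4 * H) +
          ∑ h ∈ Finset.Icc 1 H, (1 - Real.cos (2 * π * t * h)) / (2 * h))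
        (π * Real.sin (π * t * H) ^ 2 * Real.cos (π * t) / Real.sin (π * t)) t ∧
      0 ≤ π * Real.sin (π * t * H) ^ 2 * Real.cos (π * t) / Real.sin (π * t) := by
  have nonneg : ∀ t : ℝ, 0 < t → t ≤ 1 / 2 →
      0 ≤ π * Real.sin (π * t * H) ^ 2 * Real.cos (π * t) / Real.sin (π * t) := by
    intro t h0 h2
    exact div_nonneg (mul_nonneg (mul_nonneg Real.pi_pos.le (sq_nonneg _))
      (cos_pi_nonneg h0.le h2)) (sin_pi_pos h0 h2).le
  constructor
  · apply monotoneOn_of_deriv_nonneg (convex_Icc 0 (1 / 2))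
    · apply Continuous.continuousOn
      fun_prop
    · intro x hx
      exact (hasDerivAt_g H hH x).differentiableAt.differentiableWithinAt
    · intro x hx
      rw [interior_Icc] at hx
      rw [(hasDerivAt_g H hH x).deriv, g_deriv_eq H x (sin_pi_pos hx.1 hx.2.le).ne']
      exact nonneg x hx.1 hx.2.le
  · intro t ht
    refine ⟨?_, nonneg t ht.1 ht.2⟩
    exact (g_deriv_eq H t (sin_pi_pos ht.1 ht.2).ne') ▸ hasDerivAt_g H hH t
end

section
/- Let (X(h))_{h∈ℤ∖{0}} be independent identically distributed real random variables with |X(h)| ≤ N almost surely and E(X(h)^{2ℓ+1}) = 0 for all integers ℓ ≥ 0. Let (c(h)) be complex numbers with |c(h)| ≤ c₀/|h|. Then for all real 1 ≤ y < z and all positive integers n, E(|∑_{y≤|h|<z} c(h)X(h)|^{2n}) ≤ (8(c₀N)²n/y)^n. -/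
open MeasureTheory ProbabilityTheory Real

-- telescoping sum bound
lemma sum_inv_sq_Icc (m M : ℤ) (hm : 1 ≤ m) :
    ∑ h ∈ Finset.Icc m M, (1:ℝ) / (h:ℝ)^2 ≤ 2 / (m:ℝ) := by
  rcases lt_or_ge M m with h | h
  · rw [Finset.Icc_eq_empty (not_le.mpr h), Finset.sum_empty]
    positivity
  · have key : ∀ K : ℤ, m ≤ K →
        ∑ h ∈ Finset.Icc m K, (1:ℝ) / (h:ℝ)^2 ≤ 2/(m:ℝ) - 2/((K:ℝ)+1) := by
      refine fun K hK => Int.le_induction (motive := fun K _ => ∑ h ∈ Finset.Icc m K, (1:ℝ) / (h:ℝ)^2 ≤ 2/(m:ℝ) - 2/((K:ℝ)+1)) ?_ ?_ K hK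
      · rw [Finset.Icc_self, Finset.sum_singleton]
        have hm' : (1:ℝ) ≤ (m:ℝ) := by exact_mod_cast hm
        rw [div_sub_div _ _ (by positivity) (by positivity), div_le_div_iff₀ (by positivity) (by positivity)]
        nlinarith
      · intro K hK0 ih
        have hins : Finset.Icc m (K+1) = insert (K+1) (Finset.Icc m K) := by
          ext x; simp only [Finset.mem_Icc, Finset.mem_insert]; omega
        rw [hins, Finset.sum_insert (by simp [Finset.mem_Icc])]
        have hK' : (1:ℝ) ≤ (K:ℝ) := by exact_mod_cast hm.trans hK0
        have hstep : (1:ℝ)/((K:ℝ)+1)^2 ≤ 2/((K:ℝ)+1) - 2/((K:ℝ)+1+1) := by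
          rw [div_sub_div _ _ (by positivity) (by positivity), div_le_div_iff₀ (by positivity) (by positivity)]
          nlinarith
        push_cast at ih hstep ⊢
        linarith
    have h2 := key M h
    have hM' : (0:ℝ) < (M:ℝ)+1 := by
      have : (1:ℝ) ≤ (M:ℝ) := by exact_mod_cast hm.trans h
      linarith
    have : 0 < 2/((M:ℝ)+1) := by positivity
    linarith

-- u^m ≤ (m/e)^m e^u for u ≥ 0
lemma pow_le_exp_aux (u : ℝ) (hu : 0 ≤ u) (m : ℕ) :
    u ^ m ≤ ((m:ℝ) / Real.exp 1) ^ m * Real.exp u := by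
  rcases Nat.eq_zero_or_pos m with hm | hm
  · simp [hm, Real.one_le_exp hu]
  · have hm' : (0:ℝ) < m := by exact_mod_cast hm
    have h1 : u / m ≤ Real.exp (u/m - 1) := by
      have := Real.add_one_le_exp (u/m - 1)
      linarith
    have h2 : (u/m) ^ m ≤ (Real.exp (u/m - 1)) ^ m :=
      pow_le_pow_left₀ (by positivity) h1 m
    have h3 : (Real.exp (u/m - 1)) ^ m = Real.exp u / Real.exp 1 ^ m := by
      rw [← Real.exp_nat_mul, mul_sub, mul_div_cancel₀ _ (ne_of_gt hm'), mul_one, Real.exp_sub]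
      congr 1
      rw [← Real.exp_nat_mul, mul_one]
    have h4 : u ^ m = (u/(m:ℝ))^m * (m:ℝ)^m := by
      rw [← mul_pow, div_mul_cancel₀ _ (ne_of_gt hm')]
    calc u^m = (u/(m:ℝ))^m * (m:ℝ)^m := h4
      _ ≤ (Real.exp u / Real.exp 1 ^ m) * (m:ℝ)^m := by
          apply mul_le_mul_of_nonneg_right _ (by positivity)
          rw [← h3]; exact h2
      _ = ((m:ℝ)/Real.exp 1)^m * Real.exp u := by rw [div_pow]; ring


lemma mgf_le_of_symm_bdd {Ω : Type*} [MeasureSpace Ω] [IsProbabilityMeasure (ℙ : Measure Ω)]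
    (Y : Ω → ℝ) (hY : Measurable Y) (a t : ℝ) (ha : 0 ≤ a)
    (hbd : ∀ᵐ ω, |Y ω| ≤ a) (hmean : ∫ ω, Y ω = 0) :
    mgf Y ℙ t ≤ Real.exp (t^2 * a^2 / 2) := by
  have hYint : Integrable Y := by
    refine (integrable_const a).mono' hY.aestronglyMeasurable ?_
    filter_upwards [hbd] with ω h using by rwa [Real.norm_eq_abs]
  rcases eq_or_lt_of_le ha with rfl | hapos
  · have hY0 : ∀ᵐ ω ∂(ℙ : Measure Ω), Real.exp (t * Y ω) = 1 := by
      filter_upwards [hbd] with ω h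
      have h0 : Y ω = 0 := abs_nonpos_iff.mp h
      rw [h0, mul_zero, Real.exp_zero]
    rw [mgf, integral_congr_ae hY0]
    simp only [integral_const, measure_univ, probReal_univ, smul_eq_mul, one_mul]
    exact Real.one_le_exp (by positivity)
  · have hpt : ∀ᵐ ω ∂(ℙ : Measure Ω),
        Real.exp (t * Y ω) ≤ Real.cosh (t*a) + (Real.sinh (t*a)/a) * Y ω := by
      filter_upwards [hbd] with ω h
      obtain ⟨h1, h2⟩ := abs_le.mp h
      have hw1 : (0:ℝ) ≤ (a - Y ω)/(2*a) := by
        apply div_nonneg (by linarith) (by linarith)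
      have hw2 : (0:ℝ) ≤ (a + Y ω)/(2*a) := by
        apply div_nonneg (by linarith) (by linarith)
      have hws : (a - Y ω)/(2*a) + (a + Y ω)/(2*a) = 1 := by
        field_simp
        ring
      have hcx := convexOn_exp.2 (Set.mem_univ (-(t*a))) (Set.mem_univ (t*a)) hw1 hw2 hws
      simp only [smul_eq_mul] at hcx
      have harg : (a - Y ω)/(2*a) * (-(t*a)) + (a + Y ω)/(2*a) * (t*a) = t * Y ω := by
        field_simp
        ring
      rw [harg] at hcx
      refine hcx.trans_eq ?_
      rw [Real.cosh_eq, Real.sinh_eq]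
      field_simp
      ring
    have hint1 : Integrable (fun ω => Real.exp (t * Y ω)) := by
      refine (integrable_const (Real.exp (|t| * a))).mono'
        ((hY.const_mul t).exp.aestronglyMeasurable) ?_
      filter_upwards [hbd] with ω hω
      rw [Real.norm_eq_abs, Real.abs_exp]
      apply Real.exp_le_exp.mpr
      calc t * Y ω ≤ |t * Y ω| := le_abs_self _
        _ = |t| * |Y ω| := abs_mul _ _
        _ ≤ |t| * a := mul_le_mul_of_nonneg_left hω (abs_nonneg _)
    calc mgf Y ℙ t ≤ ∫ ω, (Real.cosh (t*a) + (Real.sinh (t*a)/a) * Y ω) := by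
          rw [mgf]
          exact integral_mono_ae hint1 ((integrable_const _).add (hYint.const_mul _)) hpt
      _ = Real.cosh (t*a) := by
          rw [integral_add (integrable_const _) (hYint.const_mul _), integral_const_mul, hmean]
          simp
      _ ≤ Real.exp ((t*a)^2/2) := Real.cosh_le_exp_half_sq _
      _ = Real.exp (t^2*a^2/2) := by rw [mul_pow]

lemma moment_sum_bound {Ω : Type*} [MeasureSpace Ω] [IsProbabilityMeasure (ℙ : Measure Ω)]
    (N : ℝ) (hN : 0 < N) (X : ℤ → Ω → ℝ)
    (hmeas : ∀ h, Measurable (X h))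
    (hind : iIndepFun X)
    (hbd : ∀ h : ℤ, ∀ᵐ ω, |X h ω| ≤ N)
    (hmean : ∀ h : ℤ, ∫ ω, X h ω = 0)
    (H : Finset ℤ) (r : ℤ → ℝ) (n : ℕ) (hn : 1 ≤ n) :
    ∫ ω, (∑ h ∈ H, r h * X h ω) ^ (2*n)
      ≤ 2 * (2 * n * (N^2 * ∑ h ∈ H, (r h)^2) / Real.exp 1) ^ n := by
  have hs_nonneg : (0:ℝ) ≤ ∑ h ∈ H, (r h)^2 := Finset.sum_nonneg fun h _ => sq_nonneg _
  set v : ℝ := N^2 * ∑ h ∈ H, (r h)^2 with hv_def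
  have hv_nonneg : 0 ≤ v := by positivity
  rcases eq_or_lt_of_le hv_nonneg with hv0 | hvpos
  · -- degenerate case v = 0
    have hsum0 : ∑ h ∈ H, (r h)^2 = 0 := by
      rcases mul_eq_zero.mp hv0.symm with h | h
      · exact absurd h (pow_ne_zero 2 (ne_of_gt hN))
      · exact h
    have hr : ∀ h ∈ H, r h = 0 := by
      intro h hh
      have := (Finset.sum_eq_zero_iff_of_nonneg (fun h _ => sq_nonneg (r h))).mp hsum0 h hh
      exact pow_eq_zero_iff two_ne_zero |>.mp this
    have hL : ∫ ω, (∑ h ∈ H, r h * X h ω) ^ (2*n) = 0 := by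
      have hfun : (fun ω : Ω => (∑ h ∈ H, r h * X h ω) ^ (2*n)) = fun _ => 0 := by
        funext ω
        rw [Finset.sum_eq_zero (fun h hh => by rw [hr h hh, zero_mul]),
          zero_pow (by omega : 2*n ≠ 0)]
      rw [hfun, integral_zero]
    rw [hL, ← hv0, mul_zero, zero_div, zero_pow (by omega : n ≠ 0), mul_zero]
  · -- main case v > 0
    set t := Real.sqrt (2*n/v) with ht_def
    have htpos : 0 < t := Real.sqrt_pos.mpr (by positivity)
    have ht2 : t^2 = 2*n/v := Real.sq_sqrt (by positivity)
    set Y : ℤ → Ω → ℝ := fun h ω => r h * X h ω with hY_def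
    have hYmeas : ∀ h, Measurable (Y h) := fun h => (hmeas h).const_mul _
    have hindY : iIndepFun Y :=
      hind.comp (fun h (x:ℝ) => r h * x) (fun h => measurable_const_mul _)
    have hmgf : ∀ s : ℝ, mgf (∑ h ∈ H, Y h) ℙ s ≤ Real.exp (s^2 * v / 2) := by
      intro s
      rw [hindY.mgf_sum hYmeas]
      calc ∏ h ∈ H, mgf (Y h) ℙ s
          ≤ ∏ h ∈ H, Real.exp (s^2 * (|r h| * N)^2 / 2) := by
            refine Finset.prod_le_prod (fun h _ => mgf_nonneg) (fun h _ => ?_)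
            refine mgf_le_of_symm_bdd (Y h) (hYmeas h) (|r h| * N) s (by positivity) ?_ ?_
            · filter_upwards [hbd h] with ω hω
              rw [abs_mul]
              exact mul_le_mul_of_nonneg_left hω (abs_nonneg _)
            · rw [MeasureTheory.integral_const_mul, hmean h, mul_zero]
        _ = Real.exp (∑ h ∈ H, s^2 * (|r h| * N)^2 / 2) := (Real.exp_sum H _).symm
        _ = Real.exp (s^2 * v / 2) := by
            congr 1
            rw [Finset.sum_congr rfl (fun h _ => by rw [mul_pow, sq_abs] ; ring :
              ∀ h ∈ H, s^2 * (|r h| * N)^2 / 2 = (r h)^2 * (s^2*N^2/2)), ← Finset.sum_mul]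
            rw [hv_def]
            ring
    have hbd_all : ∀ᵐ ω ∂(ℙ:Measure Ω), ∀ h : ℤ, |X h ω| ≤ N := ae_all_iff.mpr hbd
    set K := ∑ h ∈ H, |r h| * N with hK_def
    have hA_meas : Measurable (∑ h ∈ H, Y h) := by
      have : (∑ h ∈ H, Y h) = fun ω => ∑ h ∈ H, Y h ω := by
        funext ω; rw [Finset.sum_apply]
      rw [this]
      exact Finset.measurable_sum H (fun h _ => hYmeas h)
    have hA_bd : ∀ᵐ ω ∂(ℙ:Measure Ω), |(∑ h ∈ H, Y h) ω| ≤ K := by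
      filter_upwards [hbd_all] with ω hω
      rw [Finset.sum_apply]
      refine (Finset.abs_sum_le_sum_abs _ _).trans (Finset.sum_le_sum fun h _ => ?_)
      rw [hY_def, abs_mul]
      exact mul_le_mul_of_nonneg_left (hω h) (abs_nonneg _)
    have hint_exp : ∀ s : ℝ, Integrable (fun ω => Real.exp (s * (∑ h ∈ H, Y h) ω)) := by
      intro s
      refine (integrable_const (Real.exp (|s| * K))).mono'
        ((hA_meas.const_mul s).exp.aestronglyMeasurable) ?_
      filter_upwards [hA_bd] with ω hω
      rw [Real.norm_eq_abs, Real.abs_exp]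
      apply Real.exp_le_exp.mpr
      calc s * (∑ h ∈ H, Y h) ω ≤ |s * (∑ h ∈ H, Y h) ω| := le_abs_self _
        _ = |s| * |(∑ h ∈ H, Y h) ω| := abs_mul _ _
        _ ≤ |s| * K := mul_le_mul_of_nonneg_left hω (abs_nonneg _)
    set C : ℝ := ((2*n:ℝ)/(Real.exp 1 * t))^(2*n) with hC_def
    have hpt : ∀ ω : Ω, ((∑ h ∈ H, Y h) ω)^(2*n)
        ≤ C * (Real.exp (t * (∑ h ∈ H, Y h) ω) + Real.exp ((-t) * (∑ h ∈ H, Y h) ω)) := by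
      intro ω
      set x := (∑ h ∈ H, Y h) ω with hx_def
      have h1 : (t*|x|)^(2*n) ≤ ((2*n:ℝ)/Real.exp 1)^(2*n) * Real.exp (t*|x|) := by
        have := pow_le_exp_aux (t*|x|) (by positivity) (2*n)
        push_cast at this
        exact this
      have h2 : Real.exp (t*|x|) ≤ Real.exp (t*x) + Real.exp ((-t)*x) := by
        rcases abs_cases x with ⟨he, _⟩ | ⟨he, _⟩
        · rw [he]; linarith [Real.exp_pos ((-t)*x)]
        · rw [he, show t * -x = (-t)*x by ring]; linarith [Real.exp_pos (t*x)]
      have htne : t^(2*n) ≠ 0 := pow_ne_zero _ (ne_of_gt htpos)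
      calc x^(2*n) = |x|^(2*n) := ((even_two_mul n).pow_abs x).symm
        _ = (t^(2*n) * |x|^(2*n)) / t^(2*n) := (mul_div_cancel_left₀ _ htne).symm
        _ = (t*|x|)^(2*n) / t^(2*n) := by rw [mul_pow]
        _ ≤ (((2*n:ℝ)/Real.exp 1)^(2*n) * Real.exp (t*|x|)) / t^(2*n) := by
            apply div_le_div_of_nonneg_right h1 (by positivity) |>.trans_eq rfl
        _ ≤ (((2*n:ℝ)/Real.exp 1)^(2*n) * (Real.exp (t*x) + Real.exp ((-t)*x))) / t^(2*n) := by
            gcongr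
        _ = C * (Real.exp (t*x) + Real.exp ((-t)*x)) := by
            rw [hC_def, show (2*(n:ℝ))/(Real.exp 1 * t) = ((2*(n:ℝ))/Real.exp 1)/t from by
              rw [div_div], div_pow _ (t), div_mul_eq_mul_div]
    have hCnn : 0 ≤ C := by positivity
    have hI : ∫ ω, ((∑ h ∈ H, Y h) ω)^(2*n)
        ≤ C * (mgf (∑ h ∈ H, Y h) ℙ t + mgf (∑ h ∈ H, Y h) ℙ (-t)) := by
      calc ∫ ω, ((∑ h ∈ H, Y h) ω)^(2*n)
          ≤ ∫ ω, C * (Real.exp (t * (∑ h ∈ H, Y h) ω) + Real.exp ((-t) * (∑ h ∈ H, Y h) ω)) := by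
            refine integral_mono_of_nonneg (Filter.Eventually.of_forall fun ω => ?_)
              (((hint_exp t).add (hint_exp (-t))).const_mul C)
              (Filter.Eventually.of_forall fun ω => hpt ω)
            exact (even_two_mul n).pow_nonneg _
        _ = C * (mgf (∑ h ∈ H, Y h) ℙ t + mgf (∑ h ∈ H, Y h) ℙ (-t)) := by
            rw [MeasureTheory.integral_const_mul, integral_add (hint_exp t) (hint_exp (-t))]
            rfl
    have hexp_n : ∀ s : ℝ, s = t ∨ s = -t → mgf (∑ h ∈ H, Y h) ℙ s ≤ Real.exp 1 ^ n := by
      intro s hs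
      have hs2 : s^2 = t^2 := by
        rcases hs with rfl | rfl
        · rfl
        · rw [neg_sq]
      have := hmgf s
      rw [hs2, ht2] at this
      refine this.trans_eq ?_
      rw [show 2*(n:ℝ)/v * v / 2 = (n:ℝ) from by field_simp, ← Real.exp_nat_mul, mul_one]
    have hfinal : C * (Real.exp 1 ^ n + Real.exp 1 ^ n) = 2 * (2 * n * v / Real.exp 1) ^ n := by
      have ht2n : t^(2*n) = (2*(n:ℝ)/v)^n := by rw [pow_mul, ht2]
      have hE : (0:ℝ) < Real.exp 1 := Real.exp_pos 1
      set E := Real.exp 1 with hE_def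
      have h1 : (2*(n:ℝ)/(E * t))^(2*n)
          = (2*(n:ℝ))^(2*n) / (E ^(2*n) * t^(2*n)) := by
        rw [div_pow, mul_pow E t]
      rw [hC_def, h1, ht2n, div_pow ((2:ℝ)*n) v n, div_pow ((2:ℝ)*n*v) E n]
      field_simp
      ring
    calc ∫ ω, (∑ h ∈ H, r h * X h ω) ^ (2*n)
        = ∫ ω, ((∑ h ∈ H, Y h) ω)^(2*n) := by
          congr 1
          funext ω
          rw [Finset.sum_apply]
      _ ≤ C * (mgf (∑ h ∈ H, Y h) ℙ t + mgf (∑ h ∈ H, Y h) ℙ (-t)) := hI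
      _ ≤ C * (Real.exp 1 ^ n + Real.exp 1 ^ n) := by
          refine mul_le_mul_of_nonneg_left (add_le_add ?_ ?_) hCnn
          · exact hexp_n t (Or.inl rfl)
          · exact hexp_n (-t) (Or.inr rfl)
      _ = 2 * (2 * n * v / Real.exp 1) ^ n := hfinal

theorem even_moment_bound
    {Ω : Type*} [MeasureSpace Ω] [IsProbabilityMeasure (ℙ : Measure Ω)]
    (N c₀ : ℝ) (hN : 0 < N) (hc₀ : 0 < c₀)
    (X : ℤ → Ω → ℝ)
    (hmeas : ∀ h, Measurable (X h))
    (hind : iIndepFun X)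
    (hid : ∀ h h' : ℤ, IdentDistrib (X h) (X h'))
    (hbd : ∀ h : ℤ, ∀ᵐ ω, |X h ω| ≤ N)
    (hodd : ∀ h : ℤ, ∀ ℓ : ℕ, ∫ ω, (X h ω) ^ (2 * ℓ + 1) = 0)
    (c : ℤ → ℂ) (hc : ∀ h : ℤ, h ≠ 0 → ‖c h‖ ≤ c₀ / |(h : ℝ)|)
    (y z : ℝ) (hy : 1 ≤ y) (hyz : y < z) (n : ℕ) (hn : 1 ≤ n) :
    ∫ ω, ‖∑ h ∈ (Finset.Icc (-⌈z⌉ : ℤ) ⌈z⌉).filter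
          (fun h : ℤ => y ≤ |(h : ℝ)| ∧ |(h : ℝ)| < z),
        c h * (X h ω : ℂ)‖ ^ (2 * n)
      ≤ (8 * (c₀ * N) ^ 2 * n / y) ^ n := by
  classical
  have hy0 : (0:ℝ) < y := lt_of_lt_of_le one_pos hy
  set H : Finset ℤ := (Finset.Icc (-⌈z⌉ : ℤ) ⌈z⌉).filter
      (fun h : ℤ => y ≤ |(h : ℝ)| ∧ |(h : ℝ)| < z) with hH_def
  have hmean : ∀ h : ℤ, ∫ ω, X h ω = 0 := by
    intro h
    simpa using hodd h 0
  set m : ℤ := ⌈y⌉ with hm_def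
  set M : ℤ := ⌈z⌉ with hM_def
  have hm1 : 1 ≤ m := by
    have := Int.ceil_pos.mpr hy0
    omega
  have hsub : H ⊆ Finset.Icc m M ∪ Finset.Icc (-M) (-m) := by
    intro h hh
    simp only [hH_def, Finset.mem_filter, Finset.mem_Icc] at hh
    obtain ⟨⟨hl, hr⟩, hy', -⟩ := hh
    have habs : m ≤ |h| := by
      rw [hm_def]
      apply Int.ceil_le.mpr
      rw [Int.cast_abs]
      exact hy'
    simp only [Finset.mem_union, Finset.mem_Icc]
    rcases abs_cases h with ⟨he, -⟩ | ⟨he, -⟩ <;> rw [he] at habs <;> omega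
  have hdisj : Disjoint (Finset.Icc m M) (Finset.Icc (-M) (-m)) := by
    rw [Finset.disjoint_left]
    intro a ha ha'
    simp only [Finset.mem_Icc] at ha ha'
    omega
  have hneg_sum : ∑ x ∈ Finset.Icc (-M) (-m), (1:ℝ)/(x:ℝ)^2
      = ∑ x ∈ Finset.Icc m M, (1:ℝ)/(x:ℝ)^2 := by
    have himg : Finset.Icc (-M) (-m) = (Finset.Icc m M).image (fun x : ℤ => -x) := by
      ext x
      simp only [Finset.mem_Icc, Finset.mem_image]
      constructor
      · intro hx; exact ⟨-x, by omega, by omega⟩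
      · rintro ⟨w, hw, rfl⟩; omega
    rw [himg, Finset.sum_image (fun a _ b _ hab => by omega)]
    refine Finset.sum_congr rfl fun x _ => ?_
    push_cast
    rw [neg_sq]
  have hsum_inv : ∑ h ∈ H, (1:ℝ)/(h:ℝ)^2 ≤ 4 / y := by
    have h1 : ∑ h ∈ H, (1:ℝ)/(h:ℝ)^2
        ≤ ∑ h ∈ Finset.Icc m M ∪ Finset.Icc (-M) (-m), (1:ℝ)/(h:ℝ)^2 :=
      Finset.sum_le_sum_of_subset_of_nonneg hsub (fun i _ _ => by positivity)
    rw [Finset.sum_union hdisj, hneg_sum] at h1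
    have h2 := sum_inv_sq_Icc m M hm1
    have hym : y ≤ (m:ℝ) := by rw [hm_def]; exact Int.le_ceil y
    have hmpos : (0:ℝ) < (m:ℝ) := by linarith
    have h3 : 2/(m:ℝ) ≤ 2/y := by
      rw [div_le_div_iff₀ hmpos hy0]
      linarith
    have h4 : 2/y + 2/y = 4/y := by ring
    linarith
  have hsumSq : ∑ h ∈ H, ((c h).re^2 + (c h).im^2) ≤ 4 * c₀^2 / y := by
    have hterm : ∀ h ∈ H, (c h).re^2 + (c h).im^2 ≤ c₀^2 * (1/(h:ℝ)^2) := by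
      intro h hh
      have hne : h ≠ 0 := by
        intro h0
        simp only [hH_def, Finset.mem_filter] at hh
        rw [h0] at hh
        simp only [Int.cast_zero, abs_zero] at hh
        linarith [hh.2.1]
      have h1 : (c h).re^2 + (c h).im^2 = ‖c h‖^2 := by
        rw [Complex.sq_norm, Complex.normSq_apply]; ring
      have h3 : ‖c h‖^2 ≤ (c₀/|(h:ℝ)|)^2 :=
        pow_le_pow_left₀ (norm_nonneg _) (hc h hne) 2
      rw [h1]
      refine h3.trans_eq ?_
      rw [div_pow, sq_abs]
      ring
    calc ∑ h ∈ H, ((c h).re^2 + (c h).im^2)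
        ≤ ∑ h ∈ H, c₀^2 * (1/(h:ℝ)^2) := Finset.sum_le_sum hterm
      _ = c₀^2 * ∑ h ∈ H, (1:ℝ)/(h:ℝ)^2 := by rw [Finset.mul_sum]
      _ ≤ c₀^2 * (4/y) := mul_le_mul_of_nonneg_left hsum_inv (sq_nonneg c₀)
      _ = 4*c₀^2/y := by ring
  -- integrability of the even powers
  have hbd_all : ∀ᵐ ω ∂(ℙ:Measure Ω), ∀ h : ℤ, |X h ω| ≤ N := ae_all_iff.mpr hbd
  have hint : ∀ r : ℤ → ℝ, Integrable (fun ω => (∑ h ∈ H, r h * X h ω)^(2*n)) := by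
    intro r
    have hAmeas : Measurable (fun ω => ∑ h ∈ H, r h * X h ω) :=
      Finset.measurable_sum H (fun h _ => (hmeas h).const_mul _)
    have hAbd : ∀ᵐ ω ∂(ℙ:Measure Ω), |∑ h ∈ H, r h * X h ω| ≤ ∑ h ∈ H, |r h| * N := by
      filter_upwards [hbd_all] with ω hω
      refine (Finset.abs_sum_le_sum_abs _ _).trans (Finset.sum_le_sum fun h _ => ?_)
      rw [abs_mul]
      exact mul_le_mul_of_nonneg_left (hω h) (abs_nonneg _)
    refine (integrable_const ((∑ h ∈ H, |r h| * N)^(2*n))).mono'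
      ((hAmeas.pow_const _).aestronglyMeasurable) ?_
    filter_upwards [hAbd] with ω hω
    rw [Real.norm_eq_abs, abs_pow]
    exact pow_le_pow_left₀ (abs_nonneg _) hω _
  have hIA := hint (fun h => (c h).re)
  have hIB := hint (fun h => (c h).im)
  have hA : ∫ ω, (∑ h ∈ H, (c h).re * X h ω)^(2*n)
      ≤ 2 * (2 * n * (N^2 * ∑ h ∈ H, ((c h).re)^2) / Real.exp 1) ^ n :=
    moment_sum_bound N hN X hmeas hind hbd hmean H (fun h => (c h).re) n hn
  have hB : ∫ ω, (∑ h ∈ H, (c h).im * X h ω)^(2*n)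
      ≤ 2 * (2 * n * (N^2 * ∑ h ∈ H, ((c h).im)^2) / Real.exp 1) ^ n :=
    moment_sum_bound N hN X hmeas hind hbd hmean H (fun h => (c h).im) n hn
  have hptwise : ∀ ω : Ω, ‖∑ h ∈ H, c h * (X h ω:ℂ)‖ ^ (2*n)
      ≤ (2:ℝ)^n * (((∑ h ∈ H, (c h).re * X h ω)^(2*n)
          + (∑ h ∈ H, (c h).im * X h ω)^(2*n))/2) := by
    intro ω
    have hsq : ∀ w : ℂ, ‖w‖ ^ 2 = w.re^2 + w.im^2 := fun w => by
      rw [Complex.sq_norm, Complex.normSq_apply]; ring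
    have e1 : (∑ h ∈ H, c h * (X h ω:ℂ)).re = ∑ h ∈ H, (c h).re * X h ω := by
      rw [Complex.re_sum]
      exact Finset.sum_congr rfl fun h _ => by simp [Complex.mul_re]
    have e2 : (∑ h ∈ H, c h * (X h ω:ℂ)).im = ∑ h ∈ H, (c h).im * X h ω := by
      rw [Complex.im_sum]
      exact Finset.sum_congr rfl fun h _ => by simp [Complex.mul_im]
    rw [pow_mul, hsq, e1, e2]
    set a := ∑ h ∈ H, (c h).re * X h ω with ha_def
    set b := ∑ h ∈ H, (c h).im * X h ω with hb_def
    have hconv := (convexOn_pow n).2 (Set.mem_Ici.mpr (sq_nonneg a)) (Set.mem_Ici.mpr (sq_nonneg b))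
      (by norm_num : (0:ℝ) ≤ 1/2) (by norm_num : (0:ℝ) ≤ 1/2) (by norm_num)
    simp only [smul_eq_mul] at hconv
    calc (a^2 + b^2)^n = 2^n * ((1/2)*a^2 + (1/2)*b^2)^n := by
          rw [show a^2 + b^2 = 2*((1/2)*a^2 + (1/2)*b^2) from by ring, mul_pow]
      _ ≤ 2^n * ((1/2)*(a^2)^n + (1/2)*(b^2)^n) :=
          mul_le_mul_of_nonneg_left hconv (by positivity)
      _ = 2^n * ((a^(2*n) + b^(2*n))/2) := by
          rw [← pow_mul, ← pow_mul]; ring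
  have hSA : (0:ℝ) ≤ ∑ h ∈ H, ((c h).re)^2 := Finset.sum_nonneg fun h _ => sq_nonneg _
  have hSB : (0:ℝ) ≤ ∑ h ∈ H, ((c h).im)^2 := Finset.sum_nonneg fun h _ => sq_nonneg _
  have hkey : (N^2 * ∑ h ∈ H, ((c h).re)^2)^n + (N^2 * ∑ h ∈ H, ((c h).im)^2)^n
      ≤ (N^2 * ∑ h ∈ H, ((c h).re)^2 + N^2 * ∑ h ∈ H, ((c h).im)^2)^n :=
    pow_add_pow_le (by positivity) (by positivity) (by omega)
  have hwle : N^2 * ∑ h ∈ H, ((c h).re)^2 + N^2 * ∑ h ∈ H, ((c h).im)^2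
      ≤ N^2 * (4*c₀^2/y) := by
    rw [← mul_add, ← Finset.sum_add_distrib]
    exact mul_le_mul_of_nonneg_left hsumSq (sq_nonneg N)
  have hEpos : (0:ℝ) < Real.exp 1 := Real.exp_pos 1
  have he2 : (2:ℝ) ≤ Real.exp 1 := by linarith [Real.add_one_le_exp 1]
  calc ∫ ω, ‖∑ h ∈ H, c h * (X h ω:ℂ)‖ ^ (2*n)
      ≤ ∫ ω, (2:ℝ)^n * (((∑ h ∈ H, (c h).re * X h ω)^(2*n)
          + (∑ h ∈ H, (c h).im * X h ω)^(2*n))/2) := by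
        refine integral_mono_of_nonneg (Filter.Eventually.of_forall fun ω => by positivity)
          (((hIA.add hIB).div_const 2).const_mul _) (Filter.Eventually.of_forall hptwise)
    _ = (2:ℝ)^n * (((∫ ω, (∑ h ∈ H, (c h).re * X h ω)^(2*n))
          + (∫ ω, (∑ h ∈ H, (c h).im * X h ω)^(2*n)))/2) := by
        rw [MeasureTheory.integral_const_mul, integral_div, integral_add hIA hIB]
    _ ≤ (2:ℝ)^n * (((2 * (2*n*(N^2 * ∑ h ∈ H, ((c h).re)^2)/Real.exp 1)^n)
          + (2 * (2*n*(N^2 * ∑ h ∈ H, ((c h).im)^2)/Real.exp 1)^n))/2) := by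
        refine mul_le_mul_of_nonneg_left ?_ (by positivity)
        linarith [hA, hB]
    _ = (2:ℝ)^n * ((2*(n:ℝ)/Real.exp 1)^n * (N^2 * ∑ h ∈ H, ((c h).re)^2)^n
          + (2*(n:ℝ)/Real.exp 1)^n * (N^2 * ∑ h ∈ H, ((c h).im)^2)^n) := by
        rw [show 2*(n:ℝ)*(N^2 * ∑ h ∈ H, ((c h).re)^2)/Real.exp 1
            = (2*(n:ℝ)/Real.exp 1) * (N^2 * ∑ h ∈ H, ((c h).re)^2) from by ring,
          show 2*(n:ℝ)*(N^2 * ∑ h ∈ H, ((c h).im)^2)/Real.exp 1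
            = (2*(n:ℝ)/Real.exp 1) * (N^2 * ∑ h ∈ H, ((c h).im)^2) from by ring,
          mul_pow, mul_pow]
        ring
    _ ≤ (2:ℝ)^n * ((2*(n:ℝ)/Real.exp 1)^n
          * (N^2 * ∑ h ∈ H, ((c h).re)^2 + N^2 * ∑ h ∈ H, ((c h).im)^2)^n) := by
        rw [← mul_add]
        exact mul_le_mul_of_nonneg_left
          (mul_le_mul_of_nonneg_left hkey (by positivity)) (by positivity)
    _ = (2*(2*(n:ℝ)/Real.exp 1)
          * (N^2 * ∑ h ∈ H, ((c h).re)^2 + N^2 * ∑ h ∈ H, ((c h).im)^2))^n := by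
        rw [← mul_assoc, ← mul_pow, ← mul_pow]
    _ ≤ (8 * (c₀ * N) ^ 2 * n / y) ^ n := by
        apply pow_le_pow_left₀ (by positivity)
        have h4e : 4*(n:ℝ)/Real.exp 1 ≤ 2*n := by
          rw [div_le_iff₀ hEpos]
          have hn' : (1:ℝ) ≤ (n:ℝ) := by exact_mod_cast hn
          nlinarith
        calc 2*(2*(n:ℝ)/Real.exp 1)
              * (N^2 * ∑ h ∈ H, ((c h).re)^2 + N^2 * ∑ h ∈ H, ((c h).im)^2)
            = (4*(n:ℝ)/Real.exp 1)
              * (N^2 * ∑ h ∈ H, ((c h).re)^2 + N^2 * ∑ h ∈ H, ((c h).im)^2) := by ring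
          _ ≤ (2*(n:ℝ))
              * (N^2 * ∑ h ∈ H, ((c h).re)^2 + N^2 * ∑ h ∈ H, ((c h).im)^2) := by
              refine mul_le_mul_of_nonneg_right h4e (by positivity)
          _ ≤ (2*(n:ℝ)) * (N^2 * (4*c₀^2/y)) := by
              refine mul_le_mul_of_nonneg_left hwle (by positivity)
          _ = 8 * (c₀ * N) ^ 2 * n / y := by ring
end

section
/- Let X be a real random variable with values in [−N, N], E(X) = 0, and P(X > N − ε) ≥ c·ε^A for all ε ∈ (0,1]. Then there is a constant C (depending on c, A, N) such that for all t > 1: N − C·log(2t)/t ≤ E(X e^{tX})/E(e^{tX}) ≤ N. -/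
open MeasureTheory

theorem tilted_mean_bound (A c N : ℝ) (hA : 0 < A) (hc : 0 < c) (hN : 0 < N) :
    ∃ C : ℝ, 0 < C ∧
      ∀ (Ω : Type) (mΩ : MeasurableSpace Ω) (μ : Measure Ω),
        IsProbabilityMeasure μ →
        ∀ X : Ω → ℝ, Measurable X →
        (∀ᵐ ω ∂μ, X ω ∈ Set.Icc (-N) N) →
        (∫ ω, X ω ∂μ) = 0 →
        (∀ ε ∈ Set.Ioc (0 : ℝ) 1, c * ε ^ A ≤ (μ {ω | N - ε < X ω}).toReal) →
        ∀ t : ℝ, 1 < t →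
          N - C * Real.log (2 * t) / t ≤
              (∫ ω, X ω * Real.exp (t * X ω) ∂μ) / (∫ ω, Real.exp (t * X ω) ∂μ) ∧
          (∫ ω, X ω * Real.exp (t * X ω) ∂μ) / (∫ ω, Real.exp (t * X ω) ∂μ) ≤ N := by
  have hlog2 : 0 < Real.log 2 := Real.log_pos one_lt_two
  have hpow : 0 < (2 * Real.log 2) ^ (A + 1) :=
    Real.rpow_pos_of_pos (by linarith) _
  set K : ℝ := 2 * N / (c * (2 * Real.log 2) ^ (A + 1)) with hK
  have hKpos : 0 < K := div_pos (by linarith) (mul_pos hc hpow)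
  refine ⟨A + 2 + K, by linarith, ?_⟩
  intro Ω mΩ μ hμ X hX hbound hmean hsmall t ht
  have ht0 : (0:ℝ) < t := by linarith
  have h2t : (1:ℝ) < 2 * t := by linarith
  have h2t0 : (0:ℝ) < 2 * t := by linarith
  set L : ℝ := Real.log (2 * t) with hL
  have hLpos : 0 < L := Real.log_pos h2t
  have hL2 : Real.log 2 ≤ L := Real.log_le_log (by norm_num) (by linarith)
  have hLt : L ≤ t := by
    rw [hL, Real.log_mul two_ne_zero (ne_of_gt ht0)]
    have h1 := Real.log_le_sub_one_of_pos ht0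
    have h2 := Real.log_two_lt_d9
    nlinarith
  have hδpos : 0 < L / t := div_pos hLpos ht0
  have hδ1 : L / t ≤ 1 := (div_le_one ht0).mpr hLt
  have hS := hsmall (L / t) ⟨hδpos, hδ1⟩
  -- integrability
  have hmexp : Measurable (fun ω => Real.exp (t * X ω)) :=
    Real.measurable_exp.comp (hX.const_mul t)
  have hint_exp : Integrable (fun ω => Real.exp (t * X ω)) μ := by
    refine Integrable.mono' (integrable_const (Real.exp (t * N)))
      hmexp.aestronglyMeasurable ?_
    filter_upwards [hbound] with ω hω
    rw [Real.norm_eq_abs, abs_of_nonneg (Real.exp_nonneg _)]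
    exact Real.exp_le_exp.mpr (mul_le_mul_of_nonneg_left hω.2 ht0.le)
  have hint_Xexp : Integrable (fun ω => X ω * Real.exp (t * X ω)) μ := by
    refine Integrable.mono' (integrable_const (N * Real.exp (t * N)))
      ((hX.mul hmexp).aestronglyMeasurable) ?_
    filter_upwards [hbound] with ω hω
    rw [Real.norm_eq_abs, abs_mul, abs_of_nonneg (Real.exp_nonneg _)]
    have h1 : |X ω| ≤ N := abs_le.mpr ⟨hω.1, hω.2⟩
    have h2 : Real.exp (t * X ω) ≤ Real.exp (t * N) :=
      Real.exp_le_exp.mpr (mul_le_mul_of_nonneg_left hω.2 ht0.le)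
    exact mul_le_mul h1 h2 (Real.exp_nonneg _) hN.le
  set D : ℝ := ∫ ω, Real.exp (t * X ω) ∂μ with hD
  set M : ℝ := ∫ ω, X ω * Real.exp (t * X ω) ∂μ with hM
  -- D positive
  have hDpos : 0 < D := by
    have h1 : Real.exp (t * (-N)) ≤ D := by
      rw [hD, show Real.exp (t * (-N)) = ∫ _ω, Real.exp (t * (-N)) ∂μ by
        simp [integral_const]]
      refine integral_mono_ae (integrable_const _) hint_exp ?_
      filter_upwards [hbound] with ω hω
      exact Real.exp_le_exp.mpr (mul_le_mul_of_nonneg_left hω.1 ht0.le)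
    exact lt_of_lt_of_le (Real.exp_pos _) h1
  -- upper bound
  have hupper : M ≤ N * D := by
    rw [hM, hD, ← integral_const_mul]
    refine integral_mono_ae hint_Xexp (hint_exp.const_mul N) ?_
    filter_upwards [hbound] with ω hω
    exact mul_le_mul_of_nonneg_right hω.2 (Real.exp_nonneg _)
  -- lower bound for D
  have hDlow : c * (L / t) ^ A * Real.exp (t * (N - L / t)) ≤ D := by
    have hset : MeasurableSet {ω | N - L / t < X ω} :=
      measurableSet_lt measurable_const hX
    calc c * (L / t) ^ A * Real.exp (t * (N - L / t))
        ≤ (μ {ω | N - L / t < X ω}).toReal * Real.exp (t * (N - L / t)) :=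
          mul_le_mul_of_nonneg_right hS (Real.exp_nonneg _)
      _ = ∫ _ω in {ω | N - L / t < X ω}, Real.exp (t * (N - L / t)) ∂μ := by
          rw [setIntegral_const]; rw [smul_eq_mul]; rfl
      _ ≤ ∫ ω in {ω | N - L / t < X ω}, Real.exp (t * X ω) ∂μ := by
          refine setIntegral_mono_on (integrable_const _).integrableOn
            hint_exp.integrableOn hset (fun ω hω => ?_)
          exact Real.exp_le_exp.mpr (mul_le_mul_of_nonneg_left (le_of_lt hω) ht0.le)
      _ ≤ D := setIntegral_le_integral hint_exp
          (Filter.Eventually.of_forall fun ω => Real.exp_nonneg _)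
  -- numerator bound
  have hnum : N * D - M ≤ (A + 2) * (L / t) * D + 2 * N * Real.exp (t * (N - (A + 2) * (L / t))) := by
    have heq : N * D - M = ∫ ω, (N - X ω) * Real.exp (t * X ω) ∂μ := by
      rw [hM, hD, ← integral_const_mul, ← integral_sub (hint_exp.const_mul N) hint_Xexp]
      congr 1; funext ω; ring
    rw [heq]
    have hrhs : (A + 2) * (L / t) * D + 2 * N * Real.exp (t * (N - (A + 2) * (L / t)))
        = ∫ ω, ((A + 2) * (L / t) * Real.exp (t * X ω)
            + 2 * N * Real.exp (t * (N - (A + 2) * (L / t)))) ∂μ := by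
      rw [integral_add (hint_exp.const_mul _) (integrable_const _),
        integral_const_mul, integral_const]
      simp [hD]
    rw [hrhs]
    refine integral_mono_ae ?_ ((hint_exp.const_mul _).add (integrable_const _)) ?_
    · have : (fun ω => (N - X ω) * Real.exp (t * X ω))
          = fun ω => N * Real.exp (t * X ω) - X ω * Real.exp (t * X ω) := by
        funext ω; ring
      rw [this]
      exact (hint_exp.const_mul N).sub hint_Xexp
    · filter_upwards [hbound] with ω hω
      rcases le_or_gt (N - X ω) ((A + 2) * (L / t)) with h | h
      · have h1 : (N - X ω) * Real.exp (t * X ω) ≤ (A + 2) * (L / t) * Real.exp (t * X ω) :=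
          mul_le_mul_of_nonneg_right h (Real.exp_nonneg _)
        have h2 : 0 ≤ 2 * N * Real.exp (t * (N - (A + 2) * (L / t))) := by positivity
        linarith
      · have hx : X ω < N - (A + 2) * (L / t) := by linarith
        have he : Real.exp (t * X ω) ≤ Real.exp (t * (N - (A + 2) * (L / t))) :=
          Real.exp_le_exp.mpr (mul_le_mul_of_nonneg_left hx.le ht0.le)
        have h1 : N - X ω ≤ 2 * N := by linarith [hω.1]
        have h3 : (N - X ω) * Real.exp (t * X ω)
            ≤ 2 * N * Real.exp (t * (N - (A + 2) * (L / t))) :=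
          mul_le_mul h1 he (Real.exp_nonneg _) (by linarith)
        have h4 : 0 ≤ (A + 2) * (L / t) * Real.exp (t * X ω) := by positivity
        linarith
  -- key arithmetic inequality
  have hQpos : (0:ℝ) < (2 * t) ^ (A + 1) := Real.rpow_pos_of_pos h2t0 _
  have hRpos : (0:ℝ) < (L / t) ^ (A + 1) := Real.rpow_pos_of_pos hδpos _
  have hPQ : (2 * Real.log 2) ^ (A + 1) ≤ (L / t) ^ (A + 1) * (2 * t) ^ (A + 1) := by
    rw [← Real.mul_rpow hδpos.le h2t0.le]
    refine Real.rpow_le_rpow (by linarith) ?_ (by linarith)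
    have h7 : L / t * (2 * t) = 2 * L := by field_simp
    rw [h7]; linarith
  have hcore : 2 * N * Real.exp (-(A + 1) * L) ≤ K * c * (L / t) ^ (A + 1) := by
    have he : Real.exp (-(A + 1) * L) = (((2 * t) ^ (A + 1) : ℝ))⁻¹ := by
      rw [← Real.rpow_neg h2t0.le, Real.rpow_def_of_pos h2t0]
      congr 1; rw [← hL]; ring
    have hKc : K * c = 2 * N / ((2 * Real.log 2) ^ (A + 1)) := by
      rw [hK]; field_simp
    have h6 : (((2 * t) ^ (A + 1) : ℝ))⁻¹ * (2 * Real.log 2) ^ (A + 1)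
        ≤ (L / t) ^ (A + 1) := by
      rw [inv_mul_le_iff₀ hQpos]
      calc (2 * Real.log 2) ^ (A + 1) ≤ (L / t) ^ (A + 1) * (2 * t) ^ (A + 1) := hPQ
        _ = (2 * t) ^ (A + 1) * (L / t) ^ (A + 1) := by ring
    rw [he, hKc]
    calc 2 * N * (((2 * t) ^ (A + 1) : ℝ))⁻¹
        = 2 * N / ((2 * Real.log 2) ^ (A + 1))
            * ((((2 * t) ^ (A + 1) : ℝ))⁻¹ * (2 * Real.log 2) ^ (A + 1)) := by
          field_simp
      _ ≤ 2 * N / ((2 * Real.log 2) ^ (A + 1)) * (L / t) ^ (A + 1) :=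
          mul_le_mul_of_nonneg_left h6 (by positivity)
  have hkey : 2 * N * Real.exp (t * (N - (A + 2) * (L / t)))
      ≤ K * (L / t) * (c * (L / t) ^ A * Real.exp (t * (N - L / t))) := by
    have hexp_split : Real.exp (t * (N - (A + 2) * (L / t)))
        = Real.exp (t * (N - L / t)) * Real.exp (-(A + 1) * L) := by
      rw [← Real.exp_add]
      congr 1
      field_simp
      ring
    have hδA1 : (L / t) * (L / t) ^ A = (L / t) ^ (A + 1) := by
      rw [Real.rpow_add hδpos, Real.rpow_one]; ring
    rw [hexp_split]
    calc 2 * N * (Real.exp (t * (N - L / t)) * Real.exp (-(A + 1) * L))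
        = (2 * N * Real.exp (-(A + 1) * L)) * Real.exp (t * (N - L / t)) := by ring
      _ ≤ (K * c * (L / t) ^ (A + 1)) * Real.exp (t * (N - L / t)) :=
          mul_le_mul_of_nonneg_right hcore (Real.exp_nonneg _)
      _ = K * (L / t) * (c * (L / t) ^ A * Real.exp (t * (N - L / t))) := by
          rw [← hδA1]; ring
  -- conclude
  have hlower : N - (A + 2 + K) * L / t ≤ M / D := by
    rw [le_div_iff₀ hDpos]
    have h5 : K * (L / t) * (c * (L / t) ^ A * Real.exp (t * (N - L / t)))
        ≤ K * (L / t) * D :=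
      mul_le_mul_of_nonneg_left hDlow (by positivity)
    have h7 : N * D - M ≤ (A + 2 + K) * (L / t) * D := by
      calc N * D - M
          ≤ (A + 2) * (L / t) * D + 2 * N * Real.exp (t * (N - (A + 2) * (L / t))) := hnum
        _ ≤ (A + 2) * (L / t) * D + K * (L / t) * D := by linarith [hkey.trans h5]
        _ = (A + 2 + K) * (L / t) * D := by ring
    have h8 : (N - (A + 2 + K) * L / t) * D = N * D - (A + 2 + K) * (L / t) * D := by
      ring
    linarith
  exact ⟨hlower, (div_le_iff₀ hDpos).mpr hupper⟩
end

section
/- Let m ≥ 2, and for −m/2 < h ≤ m/2 with h ≠ 0 define γ_m(h) = −(1/m)·Im ∑_{0≤n≤m/2} e(nh/m). Then γ_m(h) = O(1/m) if h is even, and γ_m(h) = −1/(πh) + O(1/m) if h is odd, with an absolute implied constant. -/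
open Real

lemma abs_exp_I_sub_one_le (y : ℝ) :
    ‖Complex.exp (y * Complex.I) - 1‖ ≤ |y| := by
  have h1 : Complex.exp ((y:ℂ) * Complex.I) - 1 =
      ((Real.cos y - 1 : ℝ) : ℂ) + ((Real.sin y : ℝ) : ℂ) * Complex.I := by
    rw [Complex.exp_mul_I, ← Complex.ofReal_cos, ← Complex.ofReal_sin]
    push_cast; ring
  rw [h1, Complex.norm_add_mul_I]
  have hs : Real.sin (y/2) ^ 2 ≤ (y/2) ^ 2 := Real.sin_sq_le_sq
  have hc : Real.cos y = Real.cos (y/2) ^ 2 - Real.sin (y/2) ^ 2 := by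
    rw [← Real.cos_two_mul']; ring_nf
  have hpy : Real.sin (y/2) ^ 2 + Real.cos (y/2) ^ 2 = 1 := Real.sin_sq_add_cos_sq _
  have h2 : (Real.cos y - 1) ^ 2 + Real.sin y ^ 2 ≤ y ^ 2 := by
    have hpy2 : Real.sin y ^ 2 + Real.cos y ^ 2 = 1 := Real.sin_sq_add_cos_sq _
    nlinarith
  calc √((Real.cos y - 1) ^ 2 + Real.sin y ^ 2) ≤ √(y^2) := Real.sqrt_le_sqrt h2
    _ = |y| := Real.sqrt_sq_eq_abs y

lemma abs_exp_two_I_sub_one (x : ℝ) :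
    ‖Complex.exp ((2*x : ℝ) * Complex.I) - 1‖ = 2 * |Real.sin x| := by
  have h1 : Complex.exp (((2*x:ℝ)) * Complex.I) - 1 =
      ((Real.cos (2*x) - 1 : ℝ) : ℂ) + ((Real.sin (2*x) : ℝ) : ℂ) * Complex.I := by
    rw [Complex.exp_mul_I, ← Complex.ofReal_cos, ← Complex.ofReal_sin]
    push_cast; ring
  rw [h1, Complex.norm_add_mul_I]
  have h2 : (Real.cos (2*x) - 1) ^ 2 + Real.sin (2*x) ^ 2 = (2 * |Real.sin x|) ^ 2 := by
    rw [Real.cos_two_mul', Real.sin_two_mul]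
    have hpy : Real.sin x ^ 2 + Real.cos x ^ 2 = 1 := Real.sin_sq_add_cos_sq _
    have : |Real.sin x| ^ 2 = Real.sin x ^ 2 := sq_abs _
    nlinarith
  rw [h2, Real.sqrt_sq (by positivity)]

lemma cot_bound_pos {x : ℝ} (h0 : 0 < x) (h2 : x ≤ π / 2) :
    |1/x - Real.cos x / Real.sin x| ≤ 2 := by
  have hpi : (3:ℝ) < π := Real.pi_gt_three
  have hxpi : x < π := by linarith
  have hs : 0 < Real.sin x := Real.sin_pos_of_pos_of_lt_pi h0 hxpi
  -- lower bound: x * cos x ≤ sin x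
  have hlow : x * Real.cos x ≤ Real.sin x := by
    rcases lt_or_eq_of_le h2 with h2' | h2'
    · have hc : 0 < Real.cos x := Real.cos_pos_of_mem_Ioo ⟨by linarith, h2'⟩
      have := Real.le_tan (le_of_lt h0) h2'
      rw [Real.tan_eq_sin_div_cos] at this
      calc x * Real.cos x ≤ (Real.sin x / Real.cos x) * Real.cos x :=
            mul_le_mul_of_nonneg_right this hc.le
        _ = Real.sin x := by field_simp
    · subst h2'; simp [Real.cos_pi_div_two, Real.sin_pi_div_two]
  have hnn : 0 ≤ 1/x - Real.cos x / Real.sin x := by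
    rw [sub_nonneg, div_le_div_iff₀ hs h0]
    linarith [hlow]
  rw [abs_of_nonneg hnn]
  have heq : 1/x - Real.cos x / Real.sin x = (Real.sin x - x * Real.cos x) / (x * Real.sin x) := by
    field_simp
  rw [heq, div_le_iff₀ (by positivity)]
  have hsinle : Real.sin x ≤ x := Real.sin_le h0.le
  have hcosle : 1 - Real.cos x ≤ x^2/2 := by
    have hs2 : Real.sin (x/2) ^ 2 ≤ (x/2) ^ 2 := Real.sin_sq_le_sq
    have hc : Real.cos x = Real.cos (x/2) ^ 2 - Real.sin (x/2) ^ 2 := by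
      rw [← Real.cos_two_mul']; ring_nf
    have hpy : Real.sin (x/2) ^ 2 + Real.cos (x/2) ^ 2 = 1 := Real.sin_sq_add_cos_sq _
    nlinarith
  have hsge : 2/π * x ≤ Real.sin x := Real.mul_le_sin h0.le h2
  have hps : 2 * x ≤ π * Real.sin x := by
    have hp : (0:ℝ) < π := Real.pi_pos
    rw [div_mul_eq_mul_div, div_le_iff₀ hp] at hsge
    linarith
  have h8 : x * π ≤ 8 := by nlinarith [Real.pi_lt_d2, mul_le_mul_of_nonneg_right h2 Real.pi_pos.le]
  have hA : Real.sin x - x * Real.cos x ≤ x^3/2 := by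
    nlinarith [mul_le_mul_of_nonneg_left hcosle h0.le]
  have hB : x^3/2 ≤ 2 * (x * Real.sin x) := by
    nlinarith [Real.pi_pos, mul_le_mul_of_nonneg_left hps h0.le, sq_nonneg x, mul_pos h0 h0]
  linarith

lemma cot_bound {x : ℝ} (h0 : x ≠ 0) (h2 : |x| ≤ π / 2) :
    |1/x - Real.cos x / Real.sin x| ≤ 2 := by
  rcases h0.lt_or_gt with hneg | hpos
  · have := cot_bound_pos (x := -x) (by linarith) (by rw [abs_of_neg hneg] at h2; linarith)
    rw [Real.cos_neg, Real.sin_neg] at this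
    have heq : 1/(-x) - Real.cos x / (-Real.sin x) = -(1/x - Real.cos x / Real.sin x) := by
      rw [div_neg, div_neg]; ring
    rw [heq, abs_neg] at this
    exact this
  · exact cot_bound_pos hpos (by rwa [abs_of_pos hpos] at h2)

set_option maxHeartbeats 1600000 in
theorem gamma_m_parity_asymp :
    ∃ K : ℝ, 0 < K ∧
      ∀ (m : ℕ), 2 ≤ m → ∀ (h : ℤ), h ≠ 0 →
        -(m : ℝ) / 2 < (h : ℝ) → (h : ℝ) ≤ (m : ℝ) / 2 →
        (Even h →
          |(-(1 / (m : ℝ))) *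
              (∑ n ∈ Finset.range (m / 2 + 1),
                Complex.exp (2 * (π : ℂ) * Complex.I * (n : ℂ) * (h : ℂ) / (m : ℂ))).im| ≤
            K / m) ∧
        (Odd h →
          |(-(1 / (m : ℝ))) *
              (∑ n ∈ Finset.range (m / 2 + 1),
                Complex.exp (2 * (π : ℂ) * Complex.I * (n : ℂ) * (h : ℂ) / (m : ℂ))).im
            + 1 / (π * (h : ℝ))| ≤ K / m) := by
  refine ⟨4, by norm_num, ?_⟩
  intro m hm h hh0 hlow hhigh
  have hm2 : (2:ℝ) ≤ m := by exact_mod_cast hm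
  have hm0 : (0:ℝ) < m := by linarith
  have hmC : (m:ℂ) ≠ 0 := Nat.cast_ne_zero.2 (by omega)
  have hhR : (h:ℝ) ≠ 0 := Int.cast_ne_zero.2 hh0
  have habs : |(h:ℝ)| ≤ (m:ℝ)/2 := abs_le.2 ⟨by linarith, hhigh⟩
  have habs0 : 0 < |(h:ℝ)| := abs_pos.2 hhR
  set x : ℝ := π * h / m with hxdef
  have hx0 : x ≠ 0 := div_ne_zero (mul_ne_zero Real.pi_ne_zero hhR) (ne_of_gt hm0)
  have hxabs : |x| = π * |(h:ℝ)| / m := by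
    rw [hxdef, abs_div, abs_mul, abs_of_pos Real.pi_pos, abs_of_pos hm0]
  have hxle : |x| ≤ π/2 := by
    rw [hxabs, div_le_div_iff₀ hm0 (by norm_num : (0:ℝ) < 2)]
    nlinarith [Real.pi_pos, habs]
  set q : ℂ := Complex.exp (2*(π:ℂ)*Complex.I*(h:ℂ)/(m:ℂ)) with hqdef
  have hq2x : q = Complex.exp ((2*x : ℝ) * Complex.I) := by
    rw [hqdef]; congr 1; push_cast [hxdef]; field_simp
  have habsq : ‖q - 1‖ = 2 * |Real.sin x| := by
    rw [hq2x]; exact abs_exp_two_I_sub_one x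
  have hsin : 2/π * |x| ≤ |Real.sin x| := by
    rcases le_or_gt 0 x with hx | hx
    · rw [abs_of_nonneg hx]
      exact le_trans (Real.mul_le_sin hx (by rwa [abs_of_nonneg hx] at hxle)) (le_abs_self _)
    · rw [abs_of_neg hx]
      have := Real.mul_le_sin (x := -x) (by linarith) (by rwa [abs_of_neg hx] at hxle)
      rw [Real.sin_neg] at this
      exact le_trans this (neg_le_abs _)
  have hden : 4 * |(h:ℝ)| / m ≤ ‖q - 1‖ := by
    rw [habsq]
    have heq : 2/π * |x| = 2 * |(h:ℝ)| / m := by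
      rw [hxabs]; field_simp
    rw [heq] at hsin
    rw [div_le_iff₀ hm0] at hsin ⊢
    linarith
  have hden0 : 0 < ‖q - 1‖ := lt_of_lt_of_le (by positivity) hden
  have hq1 : q ≠ 1 := by
    intro hcon
    rw [hqdef, Complex.exp_eq_one_iff] at hcon
    obtain ⟨n, hn⟩ := hcon
    have hne : (2*(π:ℂ)*Complex.I) ≠ 0 := by
      simp [Complex.ofReal_ne_zero, Real.pi_ne_zero, Complex.I_ne_zero]
    have key : (h:ℂ) = n * m := by
      apply mul_left_cancel₀ hne
      field_simp at hn
      linear_combination (2*(π:ℂ)*Complex.I) * hn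
    have hZ : h = n * m := by exact_mod_cast key
    have hn0 : n ≠ 0 := by rintro rfl; simp at hZ; exact hh0 hZ
    have hmz : (m:ℤ) ≤ |h| := by
      rw [hZ, abs_mul, abs_of_nonneg (by positivity : (0:ℤ) ≤ (m:ℤ))]
      nlinarith [Int.one_le_abs hn0, Int.ofNat_le.2 hm]
    have hmr : (m:ℝ) ≤ |(h:ℝ)| := by
      rw [← Int.cast_abs]; exact_mod_cast hmz
    linarith
  set N := m / 2 with hNdef
  have hterm : ∀ n ∈ Finset.range (N+1),
      Complex.exp (2*(π:ℂ)*Complex.I*(n:ℂ)*(h:ℂ)/(m:ℂ)) = q ^ n := by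
    intro n _
    rw [hqdef, ← Complex.exp_nat_mul]
    congr 1
    field_simp
  obtain ⟨e, he0, he1, hee⟩ : ∃ e : ℝ, 0 < e ∧ e ≤ 1 ∧ ((N:ℝ) + 1) = m/2 + e := by
    refine ⟨(N:ℝ) + 1 - m/2, ?_, ?_, by ring⟩
    · have : (m:ℝ) ≤ 2*N + 1 := by exact_mod_cast (by omega : m ≤ 2*(m/2)+1)
      linarith
    · have : (2*N:ℝ) ≤ m := by exact_mod_cast (by omega : 2*(m/2) ≤ m)
      linarith
  set y : ℝ := 2*π*e*(h:ℝ)/m with hydef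
  have hyabs : |y| ≤ 2*π*|(h:ℝ)|/m := by
    rw [hydef, abs_div, abs_of_pos hm0, abs_mul,
      abs_of_pos (by positivity : (0:ℝ) < 2*π*e)]
    rw [div_le_div_iff₀ hm0 hm0]
    nlinarith [mul_le_mul_of_nonneg_right he1
      (le_of_lt (by positivity : (0:ℝ) < 2 * π * |(h:ℝ)| * (m:ℝ)))]
  have hpow : q^(N+1) = Complex.exp ((π:ℂ)*Complex.I*(h:ℂ)) * Complex.exp ((y:ℝ)*Complex.I) := by
    rw [hqdef, ← Complex.exp_nat_mul, ← Complex.exp_add]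
    congr 1
    have heeC : ((N:ℂ) + 1) = (m:ℂ)/2 + (e:ℂ) := by
      have h' := congrArg (fun t : ℝ => (t:ℂ)) hee
      push_cast at h'
      exact h'
    push_cast [hydef]
    rw [show ((N:ℂ) + 1) * (2 * (π:ℂ) * Complex.I * (h:ℂ) / (m:ℂ))
        = ((m:ℂ)/2 + (e:ℂ)) * (2 * (π:ℂ) * Complex.I * (h:ℂ) / (m:ℂ)) by rw [← heeC]]
    field_simp
  set u : ℂ := Complex.exp ((y:ℝ)*Complex.I) with hudef
  have hu1 : ‖u - 1‖ ≤ 2*π*|(h:ℝ)|/m := le_trans (abs_exp_I_sub_one_le y) hyabs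
  have hR : ‖(u-1)/(q-1)‖ ≤ π/2 := by
    rw [norm_div, div_le_iff₀ hden0]
    calc ‖u-1‖ ≤ 2*π*|(h:ℝ)|/m := hu1
      _ = π/2 * (4*|(h:ℝ)|/m) := by ring
      _ ≤ π/2 * ‖q-1‖ := by
          have := Real.pi_pos
          gcongr
  have hRim : |((u-1)/(q-1)).im| ≤ π/2 := le_trans (Complex.abs_im_le_norm _) hR
  have hπ4 : π ≤ 4 := by linarith [Real.pi_le_four]
  constructor
  · rintro ⟨k, hk⟩
    have hexp1 : Complex.exp ((π:ℂ)*Complex.I*(h:ℂ)) = 1 := by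
      rw [show ((π:ℂ)*Complex.I*(h:ℂ)) = (k:ℂ)*(2*(π:ℂ)*Complex.I) by
        rw [hk]; push_cast; ring]
      exact_mod_cast Complex.exp_int_mul_two_pi_mul_I k
    rw [Finset.sum_congr rfl hterm, geom_sum_eq hq1, hpow, hexp1, one_mul]
    rw [abs_mul, abs_neg, abs_of_pos (by positivity : (0:ℝ) < 1/m)]
    calc 1/(m:ℝ) * |((u-1)/(q-1)).im| ≤ 1/m * (π/2) := by gcongr
      _ ≤ 1/m * 4 := by gcongr; linarith
      _ = 4/m := by ring
  · rintro ⟨k, hk⟩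
    have hexpn : Complex.exp ((π:ℂ)*Complex.I*(h:ℂ)) = -1 := by
      rw [show ((π:ℂ)*Complex.I*(h:ℂ)) = (k:ℂ)*(2*(π:ℂ)*Complex.I) + (π:ℂ)*Complex.I by
        rw [hk]; push_cast; ring]
      rw [Complex.exp_add]
      rw [show ((k:ℂ)*(2*(π:ℂ)*Complex.I)) = ((k:ℤ):ℂ)*(2*(π:ℂ)*Complex.I) by push_cast; ring]
      rw [Complex.exp_int_mul_two_pi_mul_I, Complex.exp_pi_mul_I, one_mul]
    rw [Finset.sum_congr rfl hterm, geom_sum_eq hq1, hpow, hexpn]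
    have hsplit : (-1 * u - 1)/(q-1) = (-2)/(q-1) - (u-1)/(q-1) := by ring
    rw [hsplit]
    have hsx : Real.sin x ≠ 0 := by
      intro hs
      rw [hs, abs_zero] at hsin
      have hpp : (0:ℝ) < 2/π*|x| := by positivity
      linarith
    have hqre : (q - 1).re = Real.cos (2*x) - 1 := by
      rw [hq2x, Complex.sub_re, Complex.exp_ofReal_mul_I_re, Complex.one_re]
    have hqim : (q - 1).im = Real.sin (2*x) := by
      rw [hq2x, Complex.sub_im, Complex.exp_ofReal_mul_I_im, Complex.one_im]
      ring
    have hns : Complex.normSq (q - 1) = 4 * Real.sin x ^ 2 := by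
      rw [← Complex.sq_norm, habsq]
      rw [mul_pow, sq_abs]
      norm_num
    have hmain : ((-2:ℂ)/(q-1)).im = Real.cos x / Real.sin x := by
      rw [Complex.div_im, hqre, hqim, hns]
      have hre : ((-2:ℂ)).re = -2 := by norm_num
      have him : ((-2:ℂ)).im = 0 := by norm_num
      rw [hre, him, Real.sin_two_mul]
      field_simp
      ring
    rw [Complex.sub_im, hmain]
    have hmx : π * (h:ℝ) = m * x := by rw [hxdef]; field_simp
    have hkey : -(1/(m:ℝ)) * (Real.cos x / Real.sin x - ((u-1)/(q-1)).im) + 1/(π*(h:ℝ))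
        = (1/m) * (1/x - Real.cos x / Real.sin x) + (1/m) * ((u-1)/(q-1)).im := by
      rw [hmx]
      field_simp
      ring
    rw [hkey]
    have h1 : |(1/(m:ℝ)) * (1/x - Real.cos x / Real.sin x)| ≤ 1/m * 2 := by
      rw [abs_mul, abs_of_pos (by positivity : (0:ℝ) < 1/m)]
      gcongr
      exact cot_bound hx0 hxle
    have h2 : |(1/(m:ℝ)) * ((u-1)/(q-1)).im| ≤ 1/m * (π/2) := by
      rw [abs_mul, abs_of_pos (by positivity : (0:ℝ) < 1/m)]
      gcongr
    calc |(1/(m:ℝ)) * (1/x - Real.cos x / Real.sin x) + (1/m) * ((u-1)/(q-1)).im|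
        ≤ |(1/(m:ℝ)) * (1/x - Real.cos x / Real.sin x)| + |(1/m) * ((u-1)/(q-1)).im| :=
          abs_add_le _ _
      _ ≤ 1/m * 2 + 1/m * (π/2) := add_le_add h1 h2
      _ = 1/m * (2 + π/2) := by ring
      _ ≤ 1/m * 4 := by gcongr; linarith
      _ = 4/m := by ring
end
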